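/- arXiv:1910.09500 — 2 statements merged into one kernel-verified Lean document; each statement's English description precedes it below -/
import Mathlib

section
/- Let λ : ℤ₊ → ℝ satisfy (UB). For every t ≥ 0, y ∈ ℤ₊ and every integer l: Σ_{x ∈ ℤ₊, x > y} λ(x)^{−1} · (1/(2πi)) ∮_{C_λ} ψ_x(w) w^l e^{−tw} dw = −(1/(2πi)) ∮_{C_λ} ψ_y(w) w^{l−1} e^{−tw} dw, the series on the left converging absolutely. (Equivalently, with φ(y,x) := −λ(y)^{−1} 1(x > y) and Ψ^n_{n−j}(x) := −(1/λ(x))·(1/(2πi)) ∮_{C_λ} ψ_x(w) w^{n−j} e^{−tw} dw, one has φ * Ψ^n_{n−j} = Ψ^{n−1}_{n−1−j}.) -/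
open Complex MeasureTheory Finset
open scoped Real ComplexOrder

/-- ψ_x(w) = ∏_{k=0}^{x} λ(k)/(λ(k)−w). -/
noncomputable def psiF (lam : ℕ → ℝ) (x : ℕ) (w : ℂ) : ℂ :=
  ∏ k ∈ Finset.range (x + 1), (lam k : ℂ) / ((lam k : ℂ) - w)

/-- p_x(w) = ∏_{k=0}^{x−1} (λ(k)−w)/λ(k). -/
noncomputable def pF (lam : ℕ → ℝ) (x : ℕ) (w : ℂ) : ℂ :=
  ∏ k ∈ Finset.range x, (((lam k : ℂ) - w) / (lam k : ℂ))

/-- e^{tL}(x,y) := −(1/λ(y))·(1/(2πi)) ∮_{|w|=R} ψ_y(w) p_x(w) e^{−tw} dw,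
the contour being the counterclockwise circle of radius R centred at 0. -/
noncomputable def eL (lam : ℕ → ℝ) (R t : ℝ) (x y : ℕ) : ℂ :=
  -(1 / (lam y : ℂ)) * ((2 * (Real.pi : ℂ) * Complex.I)⁻¹ *
    ∮ w in C(0, R), psiF lam y w * pF lam x w * Complex.exp (-(t : ℂ) * w))

set_option maxHeartbeats 1000000

section aux
variable {lam : ℕ → ℝ} {s M : ℝ}

lemma sub_ne (hs : 0 < s) (hlb : ∀ x, s ≤ lam x) (hub : ∀ x, lam x ≤ M)
    {w : ℂ} (hw : M < ‖w‖) (k : ℕ) : (lam k : ℂ) - w ≠ 0 := by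
  intro h
  have : w = (lam k : ℂ) := by linear_combination -h
  rw [this] at hw
  simp only [Complex.norm_real, Real.norm_eq_abs] at hw
  have := hub k
  have := hlb k
  have h2 : |lam k| = lam k := _root_.abs_of_nonneg (by linarith)
  linarith

lemma integrand_diff (hs : 0 < s) (hlb : ∀ x, s ≤ lam x) (hub : ∀ x, lam x ≤ M)
    (hM : 0 < M) (t : ℝ) (x : ℕ) (l' : ℤ) {w : ℂ} (hw : M < ‖w‖) :
    DifferentiableAt ℂ (fun w => psiF lam x w * w ^ l' * Complex.exp (-(t:ℂ)*w)) w := by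
  have hw0 : w ≠ 0 := by
    intro h; rw [h] at hw; simp at hw; linarith
  have h1 : DifferentiableAt ℂ (fun w => psiF lam x w) w := by
    unfold psiF
    apply DifferentiableAt.fun_finsetProd
    intro k _
    exact (differentiableAt_const _).div ((differentiableAt_const _).sub differentiableAt_id)
      (sub_ne hs hlb hub hw k)
  have h2 : DifferentiableAt ℂ (fun w : ℂ => w ^ l') w :=
    differentiableAt_zpow.mpr (Or.inl hw0)
  have h3 : DifferentiableAt ℂ (fun w : ℂ => Complex.exp (-(t:ℂ)*w)) w :=
    (differentiableAt_id.const_mul _).cexp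
  exact (h1.mul h2).mul h3

lemma psi_bound (hs : 0 < s) (hlb : ∀ x, s ≤ lam x) (hub : ∀ x, lam x ≤ M)
    {r : ℝ} (hr : M < r) (x : ℕ) {w : ℂ} (hw : ‖w‖ = r) :
    ‖psiF lam x w‖ ≤ (M / (r - M)) ^ (x + 1) := by
  have hM : 0 < M := lt_of_lt_of_le hs ((hlb 0).trans (hub 0))
  rw [psiF, norm_prod]
  calc ∏ k ∈ Finset.range (x+1), ‖(lam k : ℂ) / ((lam k : ℂ) - w)‖
      ≤ ∏ _k ∈ Finset.range (x+1), (M / (r - M)) := ?_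
    _ = (M / (r - M)) ^ (x + 1) := by rw [Finset.prod_const, Finset.card_range]
  apply Finset.prod_le_prod (fun k _ => norm_nonneg _)
  intro k _
  rw [norm_div]
  have hlk : 0 < lam k := lt_of_lt_of_le hs (hlb k)
  have h1 : ‖((lam k : ℝ) : ℂ)‖ = lam k := by
    simp [Complex.norm_real, _root_.abs_of_nonneg hlk.le]
  have h2 : r - M ≤ ‖(lam k : ℂ) - w‖ := by
    have := norm_sub_norm_le w ((lam k : ℂ))
    rw [h1, hw] at this
    calc r - M ≤ r - lam k := by linarith [hub k]
    _ ≤ ‖w - (lam k : ℂ)‖ := by linarith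
    _ = ‖(lam k : ℂ) - w‖ := by rw [norm_sub_rev]
  rw [h1]
  exact div_le_div₀ (hM.le.trans (by linarith [hub k] : M ≤ M)) (hub k) (by linarith) h2

lemma radius_eq (hs : 0 < s) (hlb : ∀ x, s ≤ lam x) (hub : ∀ x, lam x ≤ M)
    (hM : 0 < M) {R R' : ℝ} (hR : M < R) (hRR' : R ≤ R') (t : ℝ) (x : ℕ) (l' : ℤ) :
    (∮ w in C(0, R'), psiF lam x w * w ^ l' * Complex.exp (-(t:ℂ)*w)) =
      ∮ w in C(0, R), psiF lam x w * w ^ l' * Complex.exp (-(t:ℂ)*w) := by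
  apply Complex.circleIntegral_eq_of_differentiable_on_annulus_off_countable (hM.trans hR) hRR'
    (Set.countable_empty)
  · intro z hz
    have h2 : M < ‖z‖ := by
      have := hz.2
      rw [Metric.mem_ball, dist_zero_right] at this
      push_neg at this
      linarith
    exact (integrand_diff hs hlb hub hM t x l' h2).continuousAt.continuousWithinAt
  · intro z hz
    have h2 : M < ‖z‖ := by
      have := hz.1.2
      rw [Metric.mem_closedBall, dist_zero_right] at this
      push_neg at this
      linarith
    exact integrand_diff hs hlb hub hM t x l' h2

lemma circleInt (hs : 0 < s) (hlb : ∀ x, s ≤ lam x) (hub : ∀ x, lam x ≤ M)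
    (hM : 0 < M) {r : ℝ} (hr : M < r) (t : ℝ) (x : ℕ) (l' : ℤ) :
    CircleIntegrable (fun w => psiF lam x w * w ^ l' * Complex.exp (-(t:ℂ)*w)) 0 r := by
  apply ContinuousOn.circleIntegrable (le_of_lt (hM.trans hr))
  intro w hw
  rw [mem_sphere_zero_iff_norm] at hw
  exact (integrand_diff hs hlb hub hM t x l' (hw ▸ hr)).continuousAt.continuousWithinAt

lemma norm_int_bound (hs : 0 < s) (hlb : ∀ x, s ≤ lam x) (hub : ∀ x, lam x ≤ M)
    (hM : 0 < M) {r : ℝ} (hr : M < r) {t : ℝ} (ht : 0 ≤ t) (x : ℕ) (l' : ℤ) :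
    ‖∮ w in C(0, r), psiF lam x w * w ^ l' * Complex.exp (-(t:ℂ)*w)‖ ≤
      2 * π * r * ((M / (r - M)) ^ (x + 1) * r ^ l' * Real.exp (t * r)) := by
  have hr0 : 0 < r := hM.trans hr
  have := circleIntegral.norm_integral_le_of_norm_le_const (c := (0:ℂ)) (R := r)
    (C := (M / (r - M)) ^ (x + 1) * r ^ l' * Real.exp (t * r))
    (f := fun w => psiF lam x w * w ^ l' * Complex.exp (-(t:ℂ)*w)) hr0.le ?_
  · simpa [_root_.abs_of_nonneg hr0.le] using this
  intro w hw
  rw [mem_sphere_zero_iff_norm] at hw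
  rw [norm_mul, norm_mul]
  have h1 : ‖psiF lam x w‖ ≤ (M / (r - M)) ^ (x + 1) := psi_bound hs hlb hub hr x hw
  have h2 : ‖w ^ l'‖ = r ^ l' := by rw [norm_zpow, hw]
  have h3 : ‖Complex.exp (-(t:ℂ)*w)‖ ≤ Real.exp (t * r) := by
    rw [Complex.norm_exp]
    apply Real.exp_le_exp.mpr
    have hre : |w.re| ≤ ‖w‖ := Complex.abs_re_le_norm w
    rw [hw] at hre
    have h4 : (-(t:ℂ)*w).re = -(t * w.re) := by simp [Complex.mul_re]
    rw [h4]
    nlinarith [abs_le.mp hre]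
  rw [h2]
  have hq0 : (0:ℝ) ≤ (M / (r - M)) ^ (x + 1) :=
    pow_nonneg (div_nonneg hM.le (by linarith)) _
  exact mul_le_mul (mul_le_mul_of_nonneg_right h1 (zpow_nonneg hr0.le _)) h3 (norm_nonneg _)
    (mul_nonneg hq0 (zpow_nonneg hr0.le _))

lemma tele (hs : 0 < s) (hlb : ∀ x, s ≤ lam x) (hub : ∀ x, lam x ≤ M) (hM : 0 < M)
    {R : ℝ} (hR : M < R) (t : ℝ) (l : ℤ) (m : ℕ) {w : ℂ} (hw : ‖w‖ = R) :
    ((lam (m+1) : ℂ))⁻¹ * (psiF lam (m+1) w * w ^ l * Complex.exp (-(t:ℂ)*w)) =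
      psiF lam (m+1) w * w ^ (l-1) * Complex.exp (-(t:ℂ)*w)
        - psiF lam m w * w ^ (l-1) * Complex.exp (-(t:ℂ)*w) := by
  have hw' : M < ‖w‖ := hw ▸ hR
  have hw0 : w ≠ 0 := by intro h; rw [h] at hw'; simp at hw'; linarith
  have ha : (lam (m+1) : ℂ) ≠ 0 := by
    exact_mod_cast ne_of_gt (lt_of_lt_of_le hs (hlb (m+1)))
  have haw : (lam (m+1) : ℂ) - w ≠ 0 := sub_ne hs hlb hub hw' (m+1)
  have hpsi : psiF lam (m+1) w = psiF lam m w * ((lam (m+1) : ℂ) / ((lam (m+1):ℂ) - w)) := by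
    rw [psiF, psiF, Finset.prod_range_succ]
  have hzw : w ^ l = w ^ (l-1) * w := by
    rw [← zpow_add_one₀ hw0, sub_add_cancel]
  rw [hpsi, hzw]
  field_simp
  ring

end aux

/-- for every t ≥ 0, y ∈ ℤ₊ and integer l,
Σ_{x>y} λ(x)⁻¹ (1/2πi) ∮ ψ_x(w) w^l e^{−tw} dw = −(1/2πi) ∮ ψ_y(w) w^{l−1} e^{−tw} dw,
the series converging (absolutely, which in ℂ is equivalent to summability). -/
theorem stmt_15 (lam : ℕ → ℝ) (s M : ℝ) (hs : 0 < s)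
    (hlb : ∀ x, s ≤ lam x) (hub : ∀ x, lam x ≤ M)
    (R : ℝ) (hR : M < R) (t : ℝ) (ht : 0 ≤ t) (y : ℕ) (l : ℤ) :
    HasSum (fun x : { x : ℕ // y < x } =>
        ((lam x.1 : ℂ))⁻¹ * ((2 * (Real.pi : ℂ) * Complex.I)⁻¹ *
          ∮ w in C(0, R), psiF lam x.1 w * w ^ l * Complex.exp (-(t : ℂ) * w)))
      (-((2 * (Real.pi : ℂ) * Complex.I)⁻¹ *
          ∮ w in C(0, R), psiF lam y w * w ^ (l - 1) * Complex.exp (-(t : ℂ) * w))) ∧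
    Summable (fun x : { x : ℕ // y < x } =>
        ‖((lam x.1 : ℂ))⁻¹ * ((2 * (Real.pi : ℂ) * Complex.I)⁻¹ *
          ∮ w in C(0, R), psiF lam x.1 w * w ^ l * Complex.exp (-(t : ℂ) * w))‖) := by
  have hM : 0 < M := lt_of_lt_of_le hs ((hlb 0).trans (hub 0))
  have hR0 : 0 < R := hM.trans hR
  set R' : ℝ := R + 2*M with hR'def
  have hRR' : R ≤ R' := by linarith
  have hMR' : M < R' := by linarith
  set q : ℝ := M / (R' - M) with hqdef
  have hq0 : 0 ≤ q := div_nonneg hM.le (by rw [hR'def]; linarith)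
  have hq1 : q < 1 := by
    rw [hqdef, div_lt_one (by rw [hR'def]; linarith)]
    rw [hR'def]; linarith
  set c2 : ℂ := (2 * (Real.pi : ℂ) * Complex.I)⁻¹ with hc2
  have hc2n : ‖c2‖ = (2*π)⁻¹ := by
    rw [hc2, norm_inv]
    congr 1
    simp [norm_mul, Complex.norm_real, _root_.abs_of_nonneg Real.pi_pos.le]
  -- abbreviations
  set J : ℕ → ℤ → ℂ := fun x l' => ∮ w in C(0,R), psiF lam x w * w ^ l' * Complex.exp (-(t:ℂ)*w)
    with hJ
  set J' : ℕ → ℤ → ℂ := fun x l' => ∮ w in C(0,R'), psiF lam x w * w ^ l' * Complex.exp (-(t:ℂ)*w)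
    with hJ'
  have hrad : ∀ x l', J x l' = J' x l' := by
    intro x l'
    rw [hJ, hJ']
    exact (radius_eq hs hlb hub hM hR hRR' t x l').symm
  -- the sequence on ℕ
  set f : ℕ → ℂ := fun x => if y < x then ((lam x : ℂ))⁻¹ * (c2 * J x l) else 0 with hf
  -- geometric bound for the terms
  have hlamnorm : ∀ x : ℕ, ‖((lam x : ℂ))⁻¹‖ = (lam x)⁻¹ := by
    intro x
    rw [norm_inv, Complex.norm_real, Real.norm_eq_abs,
      _root_.abs_of_nonneg (le_of_lt (lt_of_lt_of_le hs (hlb x)))]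
  have hterm_bound : ∀ (l' : ℤ) (x : ℕ), ‖c2 * J x l'‖ ≤
      (R' * (q * (R' : ℝ) ^ l' * Real.exp (t * R'))) * q ^ x := by
    intro l' x
    rw [hrad x l', norm_mul, hc2n]
    have h1 : ‖J' x l'‖ ≤ 2 * π * R' * (q ^ (x+1) * (R':ℝ) ^ l' * Real.exp (t * R')) := by
      rw [hJ']
      exact norm_int_bound hs hlb hub hM hMR' ht x l'
    have h2 : (2*π)⁻¹ * ‖J' x l'‖ ≤ (2*π)⁻¹ * (2 * π * R' * (q ^ (x+1) * (R':ℝ) ^ l' * Real.exp (t * R'))) :=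
      mul_le_mul_of_nonneg_left h1 (by positivity)
    calc (2*π)⁻¹ * ‖J' x l'‖ ≤ (2*π)⁻¹ * (2 * π * R' * (q ^ (x+1) * (R':ℝ) ^ l' * Real.exp (t * R'))) := h2
      _ = (R' * (q * (R' : ℝ) ^ l' * Real.exp (t * R'))) * q ^ x := by
          rw [pow_succ]
          field_simp
  set C0 : ℝ := s⁻¹ * (R' * (q * (R' : ℝ) ^ l * Real.exp (t * R'))) with hC0
  have hfb : ∀ x : ℕ, ‖f x‖ ≤ C0 * q ^ x := by
    intro x
    rw [hf]
    by_cases hx : y < x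
    · simp only [if_pos hx]
      rw [norm_mul, hlamnorm]
      have h1 : (lam x)⁻¹ ≤ s⁻¹ := inv_anti₀ hs (hlb x)
      calc (lam x)⁻¹ * ‖c2 * J x l‖
          ≤ s⁻¹ * ((R' * (q * (R' : ℝ) ^ l * Real.exp (t * R'))) * q ^ x) :=
            mul_le_mul h1 (hterm_bound l x) (norm_nonneg _) (by positivity)
        _ = C0 * q ^ x := by rw [hC0]; ring
    · simp only [if_neg hx, norm_zero]
      have : (0:ℝ) ≤ C0 := by
        rw [hC0]
        have : (0:ℝ) < R' := by rw [hR'def]; linarith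
        positivity
      positivity
  have hsummable_norm : Summable (fun x : ℕ => ‖f x‖) := by
    apply Summable.of_nonneg_of_le (fun x => norm_nonneg _) hfb
    exact (summable_geometric_of_lt_one hq0 hq1).mul_left C0
  have hsummable : Summable f := hsummable_norm.of_norm
  -- telescoping identity for the terms
  have hterm_eq : ∀ m : ℕ, ((lam (m+1) : ℂ))⁻¹ * (c2 * J (m+1) l) =
      c2 * J (m+1) (l-1) - c2 * J m (l-1) := by
    intro m
    have hint1 : CircleIntegrable
        (fun w => psiF lam (m+1) w * w ^ (l-1) * Complex.exp (-(t:ℂ)*w)) 0 R :=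
      circleInt hs hlb hub hM hR t (m+1) (l-1)
    have hint2 : CircleIntegrable
        (fun w => psiF lam m w * w ^ (l-1) * Complex.exp (-(t:ℂ)*w)) 0 R :=
      circleInt hs hlb hub hM hR t m (l-1)
    have step1 : ((lam (m+1) : ℂ))⁻¹ * J (m+1) l =
        ∮ w in C(0,R), ((lam (m+1) : ℂ))⁻¹ •
          (psiF lam (m+1) w * w ^ l * Complex.exp (-(t:ℂ)*w)) := by
      rw [hJ]
      rw [circleIntegral.integral_smul]
      rw [smul_eq_mul]
    have step2 : (∮ w in C(0,R), ((lam (m+1) : ℂ))⁻¹ •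
          (psiF lam (m+1) w * w ^ l * Complex.exp (-(t:ℂ)*w))) =
        ∮ w in C(0,R), (psiF lam (m+1) w * w ^ (l-1) * Complex.exp (-(t:ℂ)*w)
          - psiF lam m w * w ^ (l-1) * Complex.exp (-(t:ℂ)*w)) := by
      apply circleIntegral.integral_congr hR0.le
      intro w hw
      rw [mem_sphere_zero_iff_norm] at hw
      simp only [smul_eq_mul]
      exact tele hs hlb hub hM hR t l m hw
    have step3 : (∮ w in C(0,R), (psiF lam (m+1) w * w ^ (l-1) * Complex.exp (-(t:ℂ)*w)
          - psiF lam m w * w ^ (l-1) * Complex.exp (-(t:ℂ)*w))) =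
        J (m+1) (l-1) - J m (l-1) := by
      rw [hJ]
      exact circleIntegral.integral_sub hint1 hint2
    calc ((lam (m+1) : ℂ))⁻¹ * (c2 * J (m+1) l) = c2 * (((lam (m+1) : ℂ))⁻¹ * J (m+1) l) := by ring
      _ = c2 * (J (m+1) (l-1) - J m (l-1)) := by rw [step1, step2, step3]
      _ = c2 * J (m+1) (l-1) - c2 * J m (l-1) := by ring
  -- partial sums telescope
  have hpartial : ∀ n : ℕ, ∑ i ∈ Finset.range (y + 1 + n), f i =
      c2 * J (y + n) (l-1) - c2 * J y (l-1) := by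
    intro n
    induction n with
    | zero =>
      simp only [Nat.add_zero]
      rw [Finset.sum_eq_zero, sub_self]
      intro i hi
      rw [Finset.mem_range] at hi
      rw [hf]
      simp only [if_neg (by omega : ¬ y < i)]
    | succ n ih =>
      have : y + 1 + (n + 1) = (y + 1 + n) + 1 := by omega
      rw [this, Finset.sum_range_succ, ih]
      have hxe : y + 1 + n = (y + n) + 1 := by omega
      have hfval : f (y + 1 + n) = ((lam ((y+n)+1) : ℂ))⁻¹ * (c2 * J ((y+n)+1) l) := by
        rw [hf]
        simp only [if_pos (by omega : y < y + 1 + n)]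
        rw [hxe]
      rw [hfval, hterm_eq (y+n)]
      have : y + n + 1 = y + (n + 1) := by omega
      rw [this]
      ring
  -- the tail tends to zero
  have hJ0 : Filter.Tendsto (fun m : ℕ => c2 * J m (l-1)) Filter.atTop (nhds 0) := by
    have htend : Filter.Tendsto (fun m : ℕ =>
        (R' * (q * (R' : ℝ) ^ (l-1) * Real.exp (t * R'))) * q ^ m) Filter.atTop (nhds 0) := by
      rw [show (0:ℝ) = (R' * (q * (R' : ℝ) ^ (l-1) * Real.exp (t * R'))) * 0 by ring]
      exact (tendsto_pow_atTop_nhds_zero_of_lt_one hq0 hq1).const_mul _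
    exact squeeze_zero_norm (fun m => hterm_bound (l-1) m) htend
  -- identify the sum
  have hhs : HasSum f (-(c2 * J y (l-1))) := by
    have h1 : HasSum f (∑' x, f x) := hsummable.hasSum
    have h2 : Filter.Tendsto (fun n : ℕ => ∑ i ∈ Finset.range n, f i)
        Filter.atTop (nhds (∑' x, f x)) := h1.tendsto_sum_nat
    have h3 : Filter.Tendsto (fun n : ℕ => ∑ i ∈ Finset.range (y + 1 + n), f i)
        Filter.atTop (nhds (∑' x, f x)) := by
      have hcomp : Filter.Tendsto (fun n : ℕ => y + 1 + n) Filter.atTop Filter.atTop := by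
        apply Filter.tendsto_atTop_mono (fun n => Nat.le_add_left n (y+1)) Filter.tendsto_id
      have := h2.comp hcomp
      simpa [Function.comp_def] using this
    have h4 : Filter.Tendsto (fun n : ℕ => ∑ i ∈ Finset.range (y + 1 + n), f i)
        Filter.atTop (nhds (0 - c2 * J y (l-1))) := by
      have h5 : Filter.Tendsto (fun n : ℕ => c2 * J (y + n) (l-1)) Filter.atTop (nhds 0) := by
        have hcomp : Filter.Tendsto (fun n : ℕ => y + n) Filter.atTop Filter.atTop := by
          apply Filter.tendsto_atTop_mono (fun n => Nat.le_add_left n y) Filter.tendsto_id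
        have := hJ0.comp hcomp
        simpa [Function.comp_def] using this
      have := h5.sub_const (c2 * J y (l-1))
      apply this.congr
      intro n
      exact (hpartial n).symm
    have h6 : (∑' x, f x) = 0 - c2 * J y (l-1) := tendsto_nhds_unique h3 h4
    rw [zero_sub] at h6
    rw [h6] at h1
    exact h1
  -- transfer to the subtype
  have hsupp : Function.support f ⊆ {x : ℕ | y < x} := by
    intro x hx
    by_contra h
    apply hx
    rw [hf]
    simp only [Set.mem_setOf_eq] at h
    simp [if_neg h]
  have hfun : (fun x : { x : ℕ // y < x } =>
      ((lam x.1 : ℂ))⁻¹ * (c2 * J x.1 l)) = fun x : { x : ℕ // y < x } => f x.1 := by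
    funext x
    rw [hf]
    simp only [if_pos x.2]
  constructor
  · show HasSum (fun x : { x : ℕ // y < x } =>
        ((lam x.1 : ℂ))⁻¹ * (c2 * J x.1 l)) (-(c2 * J y (l-1)))
    rw [hfun]
    exact (hasSum_subtype_iff_of_support_subset hsupp).mpr hhs
  · show Summable (fun x : { x : ℕ // y < x } =>
        ‖((lam x.1 : ℂ))⁻¹ * (c2 * J x.1 l)‖)
    have : Summable (fun x : { x : ℕ // y < x } => ‖f x.1‖) :=
      hsummable_norm.subtype {x : ℕ | y < x}
    apply this.congr
    intro x
    rw [hf]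
    simp only [if_pos x.2]
end

section
/- Let λ : ℤ₊ → ℝ satisfy (UB). For every integer k ≥ 2 and every x ∈ ℤ₊: Σ_{y ∈ ℤ₊} φ^{(k−1)}(y,x) = (1/(2πi)) ∮_{C_0} p_x(w) w^{−k} dw, where C_0 is the counterclockwise circle |w| = r for any fixed 0 < r < s; equivalently, this common value is the coefficient of w^{k−1} in the polynomial p_x(w). -/
open Complex MeasureTheory Finset
open scoped Real ComplexOrder

/-- φ(y,x) = −λ(y)⁻¹ 1(x > y). -/
noncomputable def phiF (lam : ℕ → ℝ) (y x : ℕ) : ℝ :=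
  if y < x then -(lam y)⁻¹ else 0

/-- Convolution powers: `phik lam k` is φ^{(k+1)}, i.e. `phik lam 0 = φ^{(1)} = φ` and
φ^{(k+1)}(y,x) = Σ_z φ(y,z) φ^{(k)}(z,x) (the sum over z ∈ ℤ₊ reduces to z < x since
φ^{(k)}(z,x) vanishes unless z < x). -/
noncomputable def phik (lam : ℕ → ℝ) : ℕ → ℕ → ℕ → ℝ
  | 0, y, x => phiF lam y x
  | (k + 1), y, x => ∑ z ∈ Finset.range x, phiF lam y z * phik lam k z x

/-- Elementary symmetric sums: decomposition by the minimal element. -/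
lemma esymm_min_decomp {α : Type*} [CommRing α] (g : ℕ → α) (m : ℕ) (S : Finset ℕ) :
    ∑ T ∈ S.powersetCard (m + 1), ∏ i ∈ T, g i
      = ∑ z ∈ S, g z * ∑ T ∈ (S.filter (fun i => z < i)).powersetCard m, ∏ i ∈ T, g i := by
  induction S using Finset.induction_on_min with
  | empty =>
    rw [Finset.powersetCard_eq_empty.2 (by simp)]
    simp
  | insert a S ha IH =>
    have haS : a ∉ S := fun h => lt_irrefl a (ha a h)
    have hdisj : Disjoint (S.powersetCard (m + 1))
        ((S.powersetCard m).image (insert a)) := by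
      rw [Finset.disjoint_left]
      intro T hT hT'
      rcases Finset.mem_image.1 hT' with ⟨U, _, rfl⟩
      have : a ∈ S := (Finset.mem_powersetCard.1 hT).1 (Finset.mem_insert_self a U)
      exact haS this
    have hinj : ∀ T ∈ S.powersetCard m, ∀ U ∈ S.powersetCard m,
        insert a T = insert a U → T = U := by
      intro T hT U hU h
      have haT : a ∉ T := fun hx => haS ((Finset.mem_powersetCard.1 hT).1 hx)
      have haU : a ∉ U := fun hx => haS ((Finset.mem_powersetCard.1 hU).1 hx)
      rw [← Finset.erase_insert haT, ← Finset.erase_insert haU, h]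
    have himg : ∑ T ∈ S.powersetCard m, ∏ i ∈ insert a T, g i
        = g a * ∑ T ∈ S.powersetCard m, ∏ i ∈ T, g i := by
      rw [Finset.mul_sum]
      refine Finset.sum_congr rfl fun T hT => ?_
      have haT : a ∉ T := fun hx => haS ((Finset.mem_powersetCard.1 hT).1 hx)
      rw [Finset.prod_insert haT]
    have hfa : (insert a S).filter (fun i => a < i) = S := by
      rw [Finset.filter_insert, if_neg (lt_irrefl a), Finset.filter_true_of_mem ha]
    have hfz : ∑ z ∈ S, g z *
          ∑ T ∈ ((insert a S).filter (fun i => z < i)).powersetCard m, ∏ i ∈ T, g i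
        = ∑ z ∈ S, g z * ∑ T ∈ (S.filter (fun i => z < i)).powersetCard m, ∏ i ∈ T, g i := by
      refine Finset.sum_congr rfl fun z hz => ?_
      rw [Finset.filter_insert, if_neg (by exact fun h => absurd (ha z hz) (not_lt.2 h.le))]
    rw [Finset.powersetCard_succ_insert haS, Finset.sum_union hdisj,
      Finset.sum_image hinj, himg, Finset.sum_insert haS, hfa, hfz, ← IH]
    ring

lemma range_filter_eq_Ioo (y x : ℕ) :
    (Finset.range x).filter (fun i => y < i) = Finset.Ioo y x := by
  ext z; simp [Finset.mem_Ioo, and_comm]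

lemma phik_eq (lam : ℕ → ℝ) (m : ℕ) : ∀ y x : ℕ,
    phik lam m y x = if y < x then
      -(lam y)⁻¹ * ∑ T ∈ (Finset.Ioo y x).powersetCard m, ∏ i ∈ T, -(lam i)⁻¹ else 0 := by
  induction m with
  | zero =>
    intro y x
    by_cases h : y < x <;> simp [phik, phiF, h]
  | succ m IH =>
    intro y x
    show (∑ z ∈ Finset.range x, phiF lam y z * phik lam m z x) = _
    have hterm : ∀ z ∈ Finset.range x, phiF lam y z * phik lam m z x
        = if y < z then -(lam y)⁻¹ * (-(lam z)⁻¹ *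
            ∑ T ∈ (Finset.Ioo z x).powersetCard m, ∏ i ∈ T, -(lam i)⁻¹) else 0 := by
      intro z hz
      rw [IH z x, if_pos (Finset.mem_range.1 hz), phiF]
      by_cases h : y < z <;> simp [h]
    rw [Finset.sum_congr rfl hterm, Finset.sum_ite, Finset.sum_const_zero, add_zero,
      range_filter_eq_Ioo]
    by_cases hyx : y < x
    · rw [if_pos hyx]
      have key : ∑ z ∈ Finset.Ioo y x, -(lam z)⁻¹ *
            ∑ T ∈ (Finset.Ioo z x).powersetCard m, ∏ i ∈ T, -(lam i)⁻¹
          = ∑ T ∈ (Finset.Ioo y x).powersetCard (m + 1), ∏ i ∈ T, -(lam i)⁻¹ := by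
        rw [esymm_min_decomp (fun i => -(lam i)⁻¹) m (Finset.Ioo y x)]
        refine Finset.sum_congr rfl fun z hz => ?_
        have : (Finset.Ioo y x).filter (fun i => z < i) = Finset.Ioo z x := by
          have hz' := Finset.mem_Ioo.1 hz
          ext u; simp only [Finset.mem_filter, Finset.mem_Ioo]; omega
        rw [this]
      rw [← Finset.mul_sum, key]
    · rw [if_neg hyx]
      have : Finset.Ioo y x = ∅ := Finset.Ioo_eq_empty (by omega)
      rw [this, Finset.sum_empty]

lemma circleIntegral_finset_sum {ι : Type*} (S : Finset ι) (f : ι → ℂ → ℂ) (c : ℂ) (R : ℝ)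
    (h : ∀ i ∈ S, CircleIntegrable (f i) c R) :
    (∮ w in C(c, R), ∑ i ∈ S, f i w) = ∑ i ∈ S, ∮ w in C(c, R), f i w := by
  simp only [circleIntegral, Finset.smul_sum]
  exact intervalIntegral.integral_finset_sum fun i hi => (h i hi).out

/-- for k ≥ 2 and x ∈ ℤ₊,
Σ_{y ∈ ℤ₊} φ^{(k−1)}(y,x) (a finite sum over y < x)
= (1/2πi) ∮_{C_0} p_x(w) w^{−k} dw, with C_0 the circle |w| = r, 0 < r < s;
equivalently, this common value is the coefficient of w^{k−1} in the polynomial p_x(w). -/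
theorem stmt_17 (lam : ℕ → ℝ) (s M : ℝ) (hs : 0 < s)
    (hlb : ∀ x, s ≤ lam x) (hub : ∀ x, lam x ≤ M)
    (k : ℕ) (hk : 2 ≤ k) (x : ℕ) (r : ℝ) (hr0 : 0 < r) (hrs : r < s) :
    ((∑ y ∈ Finset.range x, phik lam (k - 2) y x : ℝ) : ℂ) =
      (2 * (Real.pi : ℂ) * Complex.I)⁻¹ *
        ∮ w in C(0, r), pF lam x w * w ^ (-(k : ℤ)) := by
  have hne : ∀ i, (lam i : ℝ) ≠ 0 := fun i => (lt_of_lt_of_le hs (hlb i)).ne'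
  have hneC : ∀ i, ((lam i : ℝ) : ℂ) ≠ 0 := fun i => by
    exact_mod_cast Complex.ofReal_ne_zero.2 (hne i)
  -- LHS
  have hL : (∑ y ∈ Finset.range x, phik lam (k - 2) y x)
      = ∑ T ∈ (Finset.range x).powersetCard (k - 1), ∏ i ∈ T, -(lam i)⁻¹ := by
    have : ∀ y ∈ Finset.range x, phik lam (k - 2) y x
        = -(lam y)⁻¹ * ∑ T ∈ (Finset.Ioo y x).powersetCard (k - 2), ∏ i ∈ T, -(lam i)⁻¹ := by
      intro y hy
      rw [phik_eq lam (k - 2) y x, if_pos (Finset.mem_range.1 hy)]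
    rw [Finset.sum_congr rfl this]
    have hk1 : k - 1 = (k - 2) + 1 := by omega
    rw [hk1, esymm_min_decomp (fun i => -(lam i)⁻¹) (k - 2) (Finset.range x)]
    exact Finset.sum_congr rfl fun y _ => by rw [range_filter_eq_Ioo]
  -- expand pF as a sum
  set G : ℕ → ℂ := fun i => -((lam i : ℝ) : ℂ)⁻¹ with hG
  have hpF : ∀ w : ℂ, pF lam x w
      = ∑ T ∈ (Finset.range x).powerset, (∏ i ∈ T, G i) * w ^ T.card := by
    intro w
    have : pF lam x w = ∏ i ∈ Finset.range x, (G i * w + 1) := by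
      unfold pF
      refine Finset.prod_congr rfl fun i _ => ?_
      rw [sub_div, div_self (hneC i)]
      ring
    rw [this, Finset.prod_add]
    refine Finset.sum_congr rfl fun T _ => ?_
    rw [Finset.prod_const_one, mul_one, Finset.prod_mul_distrib, Finset.prod_const]
  -- integrand equality on the sphere
  have h2pi : (2 * (Real.pi : ℂ) * Complex.I) ≠ 0 := by
    simp [Real.pi_ne_zero, Complex.I_ne_zero]
  have hint : (∮ w in C(0, r), pF lam x w * w ^ (-(k : ℤ)))
      = ∑ T ∈ (Finset.range x).powerset,
          (∏ i ∈ T, G i) * ∮ w in C(0, r), (w - 0) ^ ((T.card : ℤ) - k) := by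
    have hcong : (∮ w in C(0, r), pF lam x w * w ^ (-(k : ℤ)))
        = ∮ w in C(0, r), ∑ T ∈ (Finset.range x).powerset,
            (∏ i ∈ T, G i) * (w - 0) ^ ((T.card : ℤ) - k) := by
      refine circleIntegral.integral_congr hr0.le fun w hw => ?_
      have hw0 : w ≠ 0 := by
        intro h
        rw [h] at hw
        simp only [Metric.mem_sphere, dist_zero_left, norm_zero] at hw
        exact hr0.ne (by simpa using hw)
      rw [hpF w, Finset.sum_mul]
      refine Finset.sum_congr rfl fun T _ => ?_
      rw [mul_assoc, sub_zero, ← zpow_natCast w T.card, ← zpow_add₀ hw0, sub_eq_add_neg]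
    rw [hcong, circleIntegral_finset_sum]
    · exact Finset.sum_congr rfl fun T _ => circleIntegral.integral_const_mul _ _ _ _
    · intro T _
      have : CircleIntegrable (fun w : ℂ => (w - 0) ^ ((T.card : ℤ) - k)) 0 r := by
        rw [circleIntegrable_sub_zpow_iff]
        right; right
        simp [abs_of_pos hr0, hr0.ne, hr0.ne']
      exact (this.const_mul _ : IntervalIntegrable _ _ _ _)
  -- compute each integral
  have hzpow : ∀ T ∈ (Finset.range x).powerset,
      (∮ w in C(0, r), (w - 0) ^ ((T.card : ℤ) - k))
        = if T.card = k - 1 then 2 * (Real.pi : ℂ) * Complex.I else 0 := by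
    intro T _
    by_cases hT : T.card = k - 1
    · rw [if_pos hT]
      have he : ((T.card : ℤ) - k) = -1 := by omega
      rw [he]
      have : (fun w : ℂ => (w - 0) ^ (-1 : ℤ)) = fun w : ℂ => (w - 0)⁻¹ := by
        funext w; rw [zpow_neg_one]
      rw [this]
      exact circleIntegral.integral_sub_inv_of_mem_ball (by simpa using hr0)
    · rw [if_neg hT]
      exact circleIntegral.integral_sub_zpow_of_ne (by omega) _ _ _
  have hsum2 : ∑ T ∈ (Finset.range x).powerset,
        (∏ i ∈ T, G i) * (∮ w in C(0, r), (w - 0) ^ ((T.card : ℤ) - k))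
      = ∑ T ∈ (Finset.range x).powerset,
        (∏ i ∈ T, G i) * (if T.card = k - 1 then 2 * (Real.pi : ℂ) * Complex.I else 0) :=
    Finset.sum_congr rfl fun T hT => by rw [hzpow T hT]
  rw [hint, hsum2]
  have : ∑ T ∈ (Finset.range x).powerset,
      (∏ i ∈ T, G i) * (if T.card = k - 1 then 2 * (Real.pi : ℂ) * Complex.I else 0)
      = (2 * (Real.pi : ℂ) * Complex.I) *
        ∑ T ∈ (Finset.range x).powersetCard (k - 1), ∏ i ∈ T, G i := by
    rw [Finset.mul_sum, Finset.powersetCard_eq_filter, Finset.sum_filter]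
    refine Finset.sum_congr rfl fun T _ => ?_
    by_cases hT : T.card = k - 1 <;> simp [hT, mul_comm]
  rw [this, ← mul_assoc, inv_mul_cancel₀ h2pi, one_mul, hL]
  push_cast
  rfl
end
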